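/- arXiv:2106.13395 — 5 statements merged into one kernel-verified Lean document; each statement's English description precedes it below -/
import Mathlib

section
/- Suppose a semivaluation v on R = ⊕_{α∈Λ} R_α is T(K)-invariant, where K is an algebraically closed field. Then for every f = f_{α_1} + ... + f_{α_k} with nonzero homogeneous components, v(f) = min_{1≤j≤k} v(f_{α_j}). (Key step: for generic a_1,...,a_k ∈ T(K), the k×k matrix A with entries A_{ij} = a_i^{α_j} is invertible, so each f_{α_i} is a K-linear combination of the translates a_j·f.) -/
section Aux

lemma tisem_exists_char {K : Type*} [Field K] [CharZero K] {r : ℕ} {α β : Fin r → ℤ}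
    (h : α ≠ β) :
    ∃ a : Multiplicative (Fin r → ℤ) →* Kˣ,
      a (Multiplicative.ofAdd α) ≠ a (Multiplicative.ofAdd β) := by
  obtain ⟨i, hi⟩ := Function.ne_iff.mp h
  refine ⟨(zpowersHom Kˣ (Units.mk0 (2:K) two_ne_zero)).comp
    (AddMonoidHom.toMultiplicative (Pi.evalAddMonoidHom (fun _ => ℤ) i)), ?_⟩
  simp only [MonoidHom.comp_apply, zpowersHom_apply]
  intro hEq
  apply hi
  have hK : ((2:K)) ^ (α i) = ((2:K)) ^ (β i) := by
    have := congrArg (Units.val) hEq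
    simpa using this
  have : ((2:ℚ)) ^ (α i) = ((2:ℚ)) ^ (β i) := by
    have hinj := (algebraMap ℚ K).injective
    apply hinj
    rw [map_zpow₀, map_zpow₀]
    simpa using hK
  exact zpow_right_injective₀ (by norm_num) (by norm_num) this

lemma tisem_inf_le_v_sum {R : Type*} [CommRing R] (v : R → WithTop ℝ)
    (hadd : ∀ f g : R, min (v f) (v g) ≤ v (f + g))
    (hzero : v 0 = ⊤)
    {ι : Type*} (s : Finset ι) (g : ι → R) :
    s.inf (fun i => v (g i)) ≤ v (∑ i ∈ s, g i) := by
  classical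
  induction s using Finset.cons_induction with
  | empty => simp [hzero]
  | cons i s hi ih =>
      rw [Finset.sum_cons, Finset.inf_cons]
      exact le_trans (min_le_min le_rfl ih) (hadd _ _)

end Aux

/-- Over an algebraically closed field, a semivaluation on a ring
graded by the lattice `M = ℤ^r` which is invariant under the torus action
`(a·v)(f) = v (Σ_α a^α f_α)` for all characters `a : M → Kˣ` satisfies
`v f = min_α v (f_α)`. -/
theorem torus_invariant_semivaluation_eq_min
    {K : Type*} [Field K] [IsAlgClosed K] [CharZero K]
    {R : Type*} [CommRing R] [Algebra K R]
    {r : ℕ}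
    (𝒜 : (Fin r → ℤ) → Submodule K R) [GradedAlgebra 𝒜]
    [∀ (α : Fin r → ℤ) (x : 𝒜 α), Decidable (x ≠ 0)]
    (v : R → WithTop ℝ)
    (hmul : ∀ f g : R, v (f * g) = v f + v g)
    (hadd : ∀ f g : R, min (v f) (v g) ≤ v (f + g))
    (hzero : v 0 = ⊤)
    (htriv : ∀ c : K, c ≠ 0 → v (algebraMap K R c) = 0)
    (hinv : ∀ (a : Multiplicative (Fin r → ℤ) →* Kˣ) (f : R),
      v (∑ α ∈ (DirectSum.decompose 𝒜 f).support,
          ((a (Multiplicative.ofAdd α) : Kˣ) : K) • ((DirectSum.decompose 𝒜 f α : R)))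
        = v f)
    (f : R) :
    v f = (DirectSum.decompose 𝒜 f).support.inf
        (fun α => v ((DirectSum.decompose 𝒜 f α : R))) := by
  classical
  -- `v` of a nonzero scalar multiple
  have hsmul : ∀ (c : K), c ≠ 0 → ∀ g : R, v (c • g) = v g := by
    intro c hc g
    rw [Algebra.smul_def, hmul, htriv c hc, zero_add]
  -- key inequality, by strong induction on the size of the support
  have key : ∀ (n : ℕ) (f : R), (DirectSum.decompose 𝒜 f).support.card = n →
      ∀ α ∈ (DirectSum.decompose 𝒜 f).support, v f ≤ v (DirectSum.decompose 𝒜 f α : R) := by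
    intro n
    induction n using Nat.strong_induction_on with
    | _ n ih =>
      intro f hcard α hα
      by_cases h1 : (DirectSum.decompose 𝒜 f).support.card ≤ 1
      · -- singleton support: f equals its unique component
        have hc1 : (DirectSum.decompose 𝒜 f).support.card = 1 :=
          le_antisymm h1 (Finset.card_pos.mpr ⟨α, hα⟩)
        obtain ⟨b, hb⟩ := Finset.card_eq_one.mp hc1
        have hab : α = b := by rw [hb] at hα; simpa using hα
        have : f = (DirectSum.decompose 𝒜 f α : R) := by
          conv_lhs => rw [← DirectSum.sum_support_decompose 𝒜 f]
          rw [hb, Finset.sum_singleton, hab]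
        rw [← this]
      · -- at least two elements in the support
        push_neg at h1
        obtain ⟨β, hβ, hβα⟩ := Finset.exists_mem_ne h1 α
        obtain ⟨a, ha⟩ := tisem_exists_char (K := K) (Ne.symm hβα)
        set cβ : K := ((a (Multiplicative.ofAdd β) : Kˣ) : K) with hcβ
        set g : R := (∑ γ ∈ (DirectSum.decompose 𝒜 f).support,
            ((a (Multiplicative.ofAdd γ) : Kˣ) : K) • ((DirectSum.decompose 𝒜 f γ : R)))
            - cβ • f with hg
        -- components of g
        have comp : ∀ γ₀ : Fin r → ℤ,
            (DirectSum.decompose 𝒜 g γ₀ : R)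
            = (((a (Multiplicative.ofAdd γ₀) : Kˣ) : K) - cβ)
                • (DirectSum.decompose 𝒜 f γ₀ : R) := by
          intro γ₀
          rw [hg, DirectSum.decompose_sub, DirectSum.decompose_sum, DirectSum.decompose_smul]
          simp only [DirectSum.decompose_smul, DirectSum.decompose_coe]
          rw [DFinsupp.sub_apply, DFinsupp.finset_sum_apply, DFinsupp.smul_apply]
          by_cases h : γ₀ ∈ (DirectSum.decompose 𝒜 f).support
          · rw [Finset.sum_eq_single_of_mem γ₀ h
              (by intro b _ hb
                  rw [DFinsupp.smul_apply, DirectSum.of_eq_of_ne _ _ _ hb.symm, smul_zero])]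
            rw [DFinsupp.smul_apply, DirectSum.of_eq_same]
            push_cast
            rw [sub_smul]
          · have h0 : (DirectSum.decompose 𝒜 f) γ₀ = 0 := by
              simpa using (DFinsupp.notMem_support_iff.mp h)
            rw [Finset.sum_eq_zero
              (by intro b hb
                  rw [DFinsupp.smul_apply,
                    DirectSum.of_eq_of_ne _ _ _ (by rintro rfl; exact h hb), smul_zero])]
            rw [h0]
            simp
        -- support of g
        have hsub : (DirectSum.decompose 𝒜 g).support
            ⊆ (DirectSum.decompose 𝒜 f).support.erase β := by
          intro γ hγ
          have hγ' : (DirectSum.decompose 𝒜 g γ : R) ≠ 0 := by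
            intro h0
            exact DFinsupp.mem_support_iff.mp hγ (by exact_mod_cast Subtype.ext h0)
          rw [comp γ] at hγ'
          refine Finset.mem_erase.mpr ⟨?_, ?_⟩
          · rintro rfl
            simp [hcβ] at hγ'
          · rw [DFinsupp.mem_support_iff]
            intro h0
            apply hγ'
            rw [h0]
            simp
        -- α remains in the support of g
        have hαg : α ∈ (DirectSum.decompose 𝒜 g).support := by
          rw [DFinsupp.mem_support_iff]
          intro h0
          have : (DirectSum.decompose 𝒜 g α : R) = 0 := by rw [h0]; simp
          rw [comp α] at this
          rcases smul_eq_zero.mp this with hc | hx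
          · exact ha (Units.ext (sub_eq_zero.mp hc))
          · exact DFinsupp.mem_support_iff.mp hα (by exact_mod_cast Subtype.ext hx)
        -- the support of g is strictly smaller
        have hlt : (DirectSum.decompose 𝒜 g).support.card < n := by
          calc (DirectSum.decompose 𝒜 g).support.card
              ≤ ((DirectSum.decompose 𝒜 f).support.erase β).card := Finset.card_le_card hsub
            _ < (DirectSum.decompose 𝒜 f).support.card := Finset.card_erase_lt_of_mem hβ
            _ = n := hcard
        -- v f ≤ v g
        have hcβ0 : cβ ≠ 0 := Units.ne_zero _
        have hvf_le_g : v f ≤ v g := by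
          have h1 := hinv a f
          have h2 : v ((-cβ) • f) = v f := hsmul _ (neg_ne_zero.mpr hcβ0) f
          have := hadd (∑ γ ∈ (DirectSum.decompose 𝒜 f).support,
              ((a (Multiplicative.ofAdd γ) : Kˣ) : K) • ((DirectSum.decompose 𝒜 f γ : R)))
              ((-cβ) • f)
          rw [h1, h2, min_self] at this
          rw [hg, sub_eq_add_neg, ← neg_smul]
          exact this
        -- conclude via the inductive hypothesis applied to g
        have hvg := ih _ hlt g rfl α hαg
        rw [comp α, hsmul _ (sub_ne_zero.mpr (fun h => ha (Units.ext h))) _] at hvg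
        exact le_trans hvf_le_g hvg
  refine le_antisymm ?_ ?_
  · exact Finset.le_inf fun α hα => key _ f rfl α hα
  · have h := tisem_inf_le_v_sum v hadd hzero (DirectSum.decompose 𝒜 f).support
      (fun α => (DirectSum.decompose 𝒜 f α : R))
    rwa [DirectSum.sum_support_decompose 𝒜 f] at h
end

section
/- Let N_t agree for t ≫ 0 with a polynomial of degree n-1 with leading coefficient V/(n-1)!, and let S̃_t → S̃ be bounded. Then lim_{m→∞} (1/m^{n+1}) Σ_{t=0}^{∞} e^{-t/m} t N_t S̃_t = V·n·S̃ = (n+1)·V·S, where S = (n/(n+1))S̃. -/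
open Filter Polynomial

private lemma aux_mul_one_sub_exp :
    Tendsto (fun m : ℕ => (m : ℝ) * (1 - Real.exp (-1 / m))) atTop (nhds 1) := by
  have hder : HasDerivAt Real.exp 1 0 := by simpa using Real.hasDerivAt_exp 0
  rw [hasDerivAt_iff_tendsto_slope] at hder
  have h0 : Tendsto (fun m : ℕ => (-1 : ℝ) / m) atTop (nhds 0) :=
    tendsto_const_div_atTop_nhds_zero_nat (-1)
  have h1 : Tendsto (fun m : ℕ => (-1 : ℝ) / m) atTop (nhdsWithin 0 {(0:ℝ)}ᶜ) := by
    apply tendsto_nhdsWithin_of_tendsto_nhds_of_eventually_within _ h0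
    filter_upwards [eventually_ge_atTop 1] with m hm
    have : (0:ℝ) < m := by exact_mod_cast hm
    simp [_root_.div_eq_zero_iff, this.ne', Set.mem_compl_iff]
  have := hder.comp h1
  apply this.congr'
  filter_upwards [eventually_ge_atTop 1] with m hm
  have hm0 : (m : ℝ) ≠ 0 := by positivity
  simp only [Function.comp_apply, slope_def_field]
  rw [Real.exp_zero]
  field_simp
  ring

private lemma aux_pow_div_choose (n : ℕ) :
    Tendsto (fun t : ℕ => (t : ℝ) ^ n / ((t + n).choose n : ℝ)) atTop
      (nhds (n.factorial : ℝ)) := by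
  have key : ∀ t : ℕ, 1 ≤ t → ((t + n).choose n : ℝ) / (t : ℝ) ^ n
      = (1 / (n.factorial : ℝ)) * ∏ i ∈ Finset.range n, (1 + ((n - i : ℕ) : ℝ) / t) := by
    intro t ht
    have ht0 : (t : ℝ) ≠ 0 := by positivity
    have hfac : ((n.factorial : ℕ) : ℝ) ≠ 0 := by positivity
    have hnat : ((t + n).choose n : ℝ) * (n.factorial : ℝ)
        = ∏ i ∈ Finset.range n, ((t : ℝ) + ((n - i : ℕ) : ℝ)) := by
      have h1 : (t + n).descFactorial n = ∏ i ∈ Finset.range n, (t + (n - i)) := by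
        rw [Nat.descFactorial_eq_prod_range]
        exact Finset.prod_congr rfl fun i hi => by
          have : i < n := Finset.mem_range.1 hi; omega
      have h2 : (t + n).descFactorial n = n.factorial * (t + n).choose n :=
        Nat.descFactorial_eq_factorial_mul_choose _ _
      have := h1 ▸ h2
      calc ((t + n).choose n : ℝ) * (n.factorial : ℝ)
          = ((n.factorial * (t + n).choose n : ℕ) : ℝ) := by push_cast; ring
        _ = ((∏ i ∈ Finset.range n, (t + (n - i)) : ℕ) : ℝ) := by rw [← this]
        _ = ∏ i ∈ Finset.range n, ((t : ℝ) + ((n - i : ℕ) : ℝ)) := by push_cast; ring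
    have hprod : ∏ i ∈ Finset.range n, (1 + ((n - i : ℕ) : ℝ) / t)
        = (∏ i ∈ Finset.range n, ((t : ℝ) + ((n - i : ℕ) : ℝ))) / (t : ℝ) ^ n := by
      rw [eq_div_iff (by positivity), show ((t:ℝ))^n = ∏ _i ∈ Finset.range n, (t:ℝ) by
        rw [Finset.prod_const, Finset.card_range], ← Finset.prod_mul_distrib]
      exact Finset.prod_congr rfl fun i _ => by field_simp
    rw [hprod, ← hnat]
    field_simp
  have hlim : Tendsto (fun t : ℕ => (1 / (n.factorial : ℝ)) *
      ∏ i ∈ Finset.range n, (1 + ((n - i : ℕ) : ℝ) / t)) atTop (nhds (1 / (n.factorial : ℝ))) := by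
    have : Tendsto (fun t : ℕ => ∏ i ∈ Finset.range n, (1 + ((n - i : ℕ) : ℝ) / t)) atTop
        (nhds (∏ _i ∈ Finset.range n, (1:ℝ))) := by
      apply tendsto_finset_prod
      intro i _
      simpa using tendsto_const_nhds.add (tendsto_const_div_atTop_nhds_zero_nat ((n - i : ℕ) : ℝ))
    simpa using tendsto_const_nhds.mul this
  have h1 : Tendsto (fun t : ℕ => ((t + n).choose n : ℝ) / (t : ℝ) ^ n) atTop
      (nhds (1 / (n.factorial : ℝ))) := by
    apply hlim.congr'
    filter_upwards [eventually_ge_atTop 1] with t ht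
    exact (key t ht).symm
  have h2 := h1.inv₀ (by positivity)
  apply h2.congr' (by filter_upwards with t; rw [inv_div]) |>.mono_right
  rw [one_div, inv_inv]

set_option maxHeartbeats 1600000 in
/-- If `N_t` agrees for `t ≫ 0` with a polynomial of degree `n-1`
with leading coefficient `V/(n-1)!`, and `S̃_t → S̃` is bounded, then
`lim_{m→∞} (1/m^{n+1}) Σ_{t=0}^∞ e^{-t/m} t N_t S̃_t = V·n·S̃`. -/
theorem exp_weighted_jumping_number_limit (n : ℕ) (hn : 1 ≤ n) (V : ℝ) (hV : 0 < V)
    (P : Polynomial ℝ) (hdeg : P.natDegree ≤ n - 1)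
    (hlead : P.coeff (n - 1) = V / (n - 1).factorial)
    (N : ℕ → ℕ) (hNpos : ∀ t, 0 < N t)
    (hNP : ∀ᶠ t : ℕ in atTop, (N t : ℝ) = P.eval (t : ℝ))
    (St : ℕ → ℝ) (S : ℝ) (hSbdd : ∃ C : ℝ, ∀ t, |St t| ≤ C)
    (hSconv : Tendsto St atTop (nhds S)) :
    Tendsto (fun m : ℕ =>
        (1 / (m : ℝ) ^ (n + 1)) *
          ∑' t : ℕ, Real.exp (-(t : ℝ) / (m : ℝ)) * (t : ℝ) * (N t : ℝ) * St t)
      atTop (nhds (V * n * S)) := by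
  have hfac0 : (0:ℝ) < ((n-1).factorial : ℝ) := by positivity
  have hd : P.natDegree = n - 1 :=
    le_antisymm hdeg (le_natDegree_of_ne_zero (by rw [hlead]; positivity))
  have hPne : P ≠ 0 := by
    intro h
    rw [h, coeff_zero] at hlead
    have : (0:ℝ) < V / ((n-1).factorial : ℝ) := by positivity
    linarith [hlead ▸ this]
  have hlc : P.leadingCoeff = V / ((n-1).factorial : ℝ) := by
    rwa [Polynomial.leadingCoeff, hd]
  -- polynomial limit
  have hPnat : Tendsto (fun t : ℕ => P.eval (t:ℝ) / (t:ℝ) ^ (n-1)) atTop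
      (nhds (V / ((n-1).factorial : ℝ))) := by
    have hdegQ : P.degree = (X ^ (n-1) : ℝ[X]).degree := by
      rw [degree_X_pow, P.degree_eq_natDegree hPne, hd]
    have h := Polynomial.div_tendsto_leadingCoeff_div_of_degree_eq P (X ^ (n-1)) hdegQ
    simp only [leadingCoeff_X_pow, div_one, hlc, eval_pow, eval_X] at h
    exact h.comp tendsto_natCast_atTop_atTop
  set c : ℕ → ℝ := fun t => ((t + n).choose n : ℝ) with hc
  have hcpos : ∀ t, (0:ℝ) < c t := fun t => by
    have := Nat.choose_pos (show n ≤ t + n by omega)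
    simp only [hc]
    exact_mod_cast this
  have hc1 : ∀ t, (1:ℝ) ≤ c t := fun t => by
    have := Nat.choose_pos (show n ≤ t + n by omega)
    simp only [hc]
    exact_mod_cast this
  set g : ℕ → ℝ := fun t => (t : ℝ) * (N t : ℝ) * St t with hg
  set L : ℝ := V * n * S with hL
  -- ratio limit
  have hratio : Tendsto (fun t => g t / c t) atTop (nhds L) := by
    have h2 := aux_pow_div_choose n
    have hmain : Tendsto
        (fun t : ℕ => (P.eval (t:ℝ) / (t:ℝ)^(n-1)) * ((t:ℝ)^n / c t) * St t)
        atTop (nhds (V / ((n-1).factorial : ℝ) * (n.factorial : ℝ) * S)) :=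
      (hPnat.mul h2).mul hSconv
    have heq : V / ((n-1).factorial : ℝ) * (n.factorial : ℝ) * S = L := by
      have hfe : (n.factorial : ℝ) = (n : ℝ) * ((n-1).factorial : ℝ) := by
        have := Nat.mul_factorial_pred (show n ≠ 0 by omega)
        exact_mod_cast this.symm
      rw [hfe, hL]
      field_simp
    rw [heq] at hmain
    apply hmain.congr'
    filter_upwards [hNP, eventually_ge_atTop 1] with t hNt ht
    have ht0 : (0:ℝ) < (t:ℝ) := by exact_mod_cast ht
    have hct : c t ≠ 0 := (hcpos t).ne'
    have hpow : (t:ℝ)^n = (t:ℝ)^(n-1) * t := by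
      rw [← pow_succ]
      congr 1
      omega
    simp only [hg, hNt]
    rw [hpow]
    field_simp
  -- global bound  |g t| ≤ M * c t
  obtain ⟨M, hM0, hM⟩ : ∃ M, 0 ≤ M ∧ ∀ t, |g t| ≤ M * c t := by
    have hev := hratio.eventually (Metric.ball_mem_nhds L one_pos)
    obtain ⟨T1, hT1⟩ := eventually_atTop.1 hev
    refine ⟨(|L| + 1) + ∑ t ∈ Finset.range T1, |g t|, by positivity, fun t => ?_⟩
    by_cases h : t < T1
    · have h1 : |g t| ≤ ∑ s ∈ Finset.range T1, |g s| :=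
        Finset.single_le_sum (fun s _ => abs_nonneg (g s)) (Finset.mem_range.2 h)
      nlinarith [hc1 t, abs_nonneg L, abs_nonneg (g t),
        Finset.sum_nonneg fun s (_ : s ∈ Finset.range T1) => abs_nonneg (g s)]
    · have h1 := hT1 t (by omega)
      rw [Real.dist_eq] at h1
      have h2 : |g t / c t| ≤ |L| + 1 := by
        have := abs_sub_abs_le_abs_sub (g t / c t) L
        linarith
      have h3 : g t = (g t / c t) * c t := (div_mul_cancel₀ (g t) (hcpos t).ne').symm
      rw [h3, abs_mul, abs_of_pos (hcpos t)]
      have : |g t / c t| * c t ≤ (|L| + 1) * c t :=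
        mul_le_mul_of_nonneg_right h2 (hcpos t).le
      refine this.trans ?_
      have hs : (0:ℝ) ≤ ∑ s ∈ Finset.range T1, |g s| :=
        Finset.sum_nonneg fun s _ => abs_nonneg _
      nlinarith [hcpos t]
  -- the normalizing sequence B
  set B : ℕ → ℝ := fun m => 1 / ((m:ℝ) * (1 - Real.exp (-1/(m:ℝ))))^(n+1) with hBdef
  have hB : Tendsto B atTop (nhds 1) := by
    have h1 := aux_mul_one_sub_exp.pow (n+1)
    have h2 : Tendsto (fun m : ℕ => (1:ℝ) / ((m:ℝ) * (1 - Real.exp (-1/(m:ℝ))))^(n+1))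
        atTop (nhds ((1:ℝ) / 1^(n+1))) :=
      Tendsto.div tendsto_const_nhds h1 (by norm_num)
    rw [hBdef]
    simpa using h2
  have key : Tendsto (fun m : ℕ =>
      ((1 / (m : ℝ) ^ (n + 1)) *
          ∑' t : ℕ, Real.exp (-(t : ℝ) / (m : ℝ)) * (t : ℝ) * (N t : ℝ) * St t) - L * B m)
      atTop (nhds 0) := by
    rw [NormedAddCommGroup.tendsto_nhds_zero]
    intro ε hε
    obtain ⟨T, hT⟩ : ∃ T, ∀ t ≥ T, |g t - L * c t| ≤ ε/4 * c t := by
      have hev := hratio.eventually (Metric.ball_mem_nhds L (show (0:ℝ) < ε/4 by linarith))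
      obtain ⟨T, hT⟩ := eventually_atTop.1 hev
      refine ⟨T, fun t ht => ?_⟩
      have h := hT t ht
      rw [Real.dist_eq] at h
      have hcp := hcpos t
      have heq2 : |g t - L * c t| = |g t / c t - L| * c t := by
        have h4 : (g t / c t - L) * c t = g t - L * c t := by
          rw [sub_mul, div_mul_cancel₀ _ hcp.ne']
        rw [← h4, abs_mul, abs_of_pos hcp]
      rw [heq2]
      exact mul_le_mul_of_nonneg_right h.le hcp.le
    set K := ∑ t ∈ Finset.range T, |g t - L * c t| with hKdef
    have hK0 : 0 ≤ K := Finset.sum_nonneg fun _ _ => abs_nonneg _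
    have hKz : Tendsto (fun m : ℕ => K / (m:ℝ)^(n+1)) atTop (nhds 0) := by
      apply Tendsto.div_atTop tendsto_const_nhds
      exact (tendsto_pow_atTop (by omega : n + 1 ≠ 0)).comp tendsto_natCast_atTop_atTop
    filter_upwards [eventually_ge_atTop 1,
      hKz.eventually_lt_const (show (0:ℝ) < ε/4 by linarith),
      hB.eventually_lt_const (show (1:ℝ) < 2 by norm_num)] with m hm1 hmK hmB
    set x : ℝ := Real.exp (-1/(m:ℝ)) with hxdef
    have hmpos : (0:ℝ) < (m:ℝ) := by exact_mod_cast hm1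
    have hx0 : 0 < x := Real.exp_pos _
    have hx1 : x < 1 := by
      rw [hxdef, Real.exp_lt_one_iff, neg_div]
      have : (0:ℝ) < 1/(m:ℝ) := by positivity
      linarith
    have hxn : ‖x‖ < 1 := by rw [Real.norm_eq_abs, abs_of_pos hx0]; exact hx1
    have hSum : HasSum (fun t : ℕ => c t * x^t) (1/(1-x)^(n+1)) :=
      hasSum_choose_mul_geometric_of_norm_lt_one n hxn
    have hSc : Summable (fun t : ℕ => c t * x^t) := hSum.summable
    have hexp : ∀ t : ℕ, Real.exp (-(t:ℝ)/(m:ℝ)) = x ^ t := fun t => by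
      rw [hxdef, ← Real.exp_nat_mul]
      congr 1
      ring
    have hA : ∑' t : ℕ, Real.exp (-(t : ℝ) / (m : ℝ)) * (t : ℝ) * (N t : ℝ) * St t
        = ∑' t : ℕ, x^t * g t := by
      refine tsum_congr fun t => ?_
      rw [hexp t, hg]
      ring
    have hSg : Summable (fun t : ℕ => x^t * g t) := by
      apply Summable.of_norm_bounded (hSc.mul_left M)
      intro t
      rw [Real.norm_eq_abs, abs_mul, abs_pow, abs_of_pos hx0]
      calc x^t * |g t| ≤ x^t * (M * c t) :=
            mul_le_mul_of_nonneg_left (hM t) (pow_nonneg hx0.le t)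
        _ = M * (c t * x^t) := by ring
    have hSh : Summable (fun t : ℕ => x^t * (g t - L * c t)) := by
      apply (hSg.sub (hSc.mul_left L)).congr
      intro t
      ring
    have hsub : ∑' t : ℕ, x^t * g t - L * ∑' t : ℕ, c t * x^t
        = ∑' t : ℕ, x^t * (g t - L * c t) := by
      rw [← tsum_mul_left, ← Summable.tsum_sub hSg (hSc.mul_left L)]
      exact tsum_congr fun t => by ring
    have hBmx : B m = (1/(m:ℝ)^(n+1)) * (1/(1-x)^(n+1)) := by
      rw [hBdef]
      simp only
      rw [← hxdef, mul_pow, ← one_div_mul_one_div]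
    have hBm : L * B m = (1/(m:ℝ)^(n+1)) * (L * ∑' t : ℕ, c t * x^t) := by
      rw [hSum.tsum_eq, hBmx]
      ring
    -- pointwise bound
    set v : ℕ → ℝ := fun t => if t < T then |g t - L * c t| else 0 with hvdef
    have hSv : Summable v := by
      apply summable_of_ne_finset_zero (s := Finset.range T)
      intro t ht
      rw [Finset.mem_range] at ht
      simp only [hvdef, if_neg ht]
    have hSw : Summable (fun t : ℕ => ε/4 * (c t * x^t)) := hSc.mul_left _
    have hbound : ∀ t : ℕ, ‖x^t * (g t - L * c t)‖ ≤ v t + ε/4 * (c t * x^t) := by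
      intro t
      rw [Real.norm_eq_abs, abs_mul, abs_pow, abs_of_pos hx0]
      have hxle : x^t ≤ 1 := pow_le_one₀ hx0.le hx1.le
      have hxtp : (0:ℝ) < x^t := pow_pos hx0 t
      by_cases h : t < T
      · simp only [hvdef, if_pos h]
        have h1 : x^t * |g t - L * c t| ≤ |g t - L * c t| := by
          nlinarith [abs_nonneg (g t - L * c t)]
        have hw0 : 0 ≤ ε/4 * (c t * x^t) := by positivity
        linarith
      · simp only [hvdef, if_neg h]
        have h1 := hT t (by omega)
        have : x^t * |g t - L * c t| ≤ x^t * (ε/4 * c t) :=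
          mul_le_mul_of_nonneg_left h1 hxtp.le
        nlinarith
    have htsum_bound : ‖∑' t : ℕ, x^t * (g t - L * c t)‖ ≤ K + ε/4 * (1/(1-x)^(n+1)) := by
      calc ‖∑' t : ℕ, x^t * (g t - L * c t)‖
          ≤ ∑' t : ℕ, ‖x^t * (g t - L * c t)‖ := norm_tsum_le_tsum_norm hSh.norm
        _ ≤ ∑' t : ℕ, (v t + ε/4 * (c t * x^t)) :=
            Summable.tsum_le_tsum hbound hSh.norm (hSv.add hSw)
        _ = K + ε/4 * (1/(1-x)^(n+1)) := by
            rw [Summable.tsum_add hSv hSw, tsum_mul_left, hSum.tsum_eq]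
            congr 1
            rw [tsum_eq_sum (s := Finset.range T) (fun t ht => by
              rw [Finset.mem_range] at ht
              simp only [hvdef, if_neg ht])]
            exact Finset.sum_congr rfl fun t ht => by
              rw [Finset.mem_range] at ht
              simp only [hvdef, if_pos ht]
    have hmp : (0:ℝ) < (m:ℝ)^(n+1) := by positivity
    have hBmpos : 0 < B m := by
      rw [hBdef]
      have h1x : 0 < 1 - x := by linarith
      positivity
    calc ‖(1 / (m : ℝ) ^ (n + 1)) *
          (∑' t : ℕ, Real.exp (-(t : ℝ) / (m : ℝ)) * (t : ℝ) * (N t : ℝ) * St t) - L * B m‖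
        = (1/(m:ℝ)^(n+1)) * ‖∑' t : ℕ, x^t * (g t - L * c t)‖ := by
          rw [hA, hBm, ← mul_sub, hsub, norm_mul, Real.norm_eq_abs (1/(m:ℝ)^(n+1)),
            abs_of_pos (by positivity)]
      _ ≤ (1/(m:ℝ)^(n+1)) * (K + ε/4 * (1/(1-x)^(n+1))) :=
          mul_le_mul_of_nonneg_left htsum_bound (by positivity)
      _ = K/(m:ℝ)^(n+1) + ε/4 * B m := by
          rw [hBmx]
          ring
      _ < ε/4 + ε/4 * 2 := by
          have h2 : ε/4 * B m < ε/4 * 2 := by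
            apply mul_lt_mul_of_pos_left hmB (by linarith)
          linarith
      _ < ε := by linarith
  have hfinal := key.add (hB.const_mul L)
  simp only [zero_add, mul_one, sub_add_cancel] at hfinal
  exact hfinal
end

section
/- Let σ ⊂ N_R ≅ R^n be a rational polyhedral cone, ξ ∈ int(σ), and set Q_ξ = {u ∈ σ^∨ : ⟨u,ξ⟩ ≤ 1}. Let e_1,...,e_n ∈ σ be a basis of N_R with determinant 1, and ι: M_R → R^n the map u ↦ (⟨u,e_1⟩,...,⟨u,e_n⟩). Then the Okounkov body Δ of the toric variety X = Spec(⊕_{u∈σ^∨∩M} C·χ^u) with respect to the valuation ν(Σ a_u χ^u) = min_u ι(u) equals ι(Q_ξ). In particular, Δ = closure of ∪_m (1/m)Conv(ι(mQ_ξ ∩ M)) = ι(Q_ξ). -/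
open Set Pointwise

noncomputable section

/-- The standard pairing on `ℝ^n`. -/
def pairing {n : ℕ} (u v : Fin n → ℝ) : ℝ := ∑ i, u i * v i

/-- The dual cone of `σ ⊆ N_ℝ = ℝ^n` inside `M_ℝ = ℝ^n`. -/
def dualCone {n : ℕ} (σ : Set (Fin n → ℝ)) : Set (Fin n → ℝ) :=
  {u | ∀ v ∈ σ, 0 ≤ pairing u v}

/-- Lattice points of `ℝ^n` (the image of `ℤ^n`). -/
def isLatticePoint {n : ℕ} (u : Fin n → ℝ) : Prop :=
  ∃ w : Fin n → ℤ, u = fun i => (w i : ℝ)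

namespace OkHelper

open Matrix

variable {n : ℕ}

lemma pairing_comm (u v : Fin n → ℝ) : pairing u v = pairing v u :=
  Finset.sum_congr rfl fun i _ => mul_comm _ _

/-- pairing as a linear map in the first variable. -/
def pairL (v : Fin n → ℝ) : (Fin n → ℝ) →ₗ[ℝ] ℝ where
  toFun u := pairing u v
  map_add' u u' := by
    unfold pairing; rw [← Finset.sum_add_distrib]
    exact Finset.sum_congr rfl fun i _ => by simp [add_mul]
  map_smul' c u := by
    show (∑ i, (c • u) i * v i) = c • ∑ i, u i * v i
    rw [smul_eq_mul, Finset.mul_sum]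
    exact Finset.sum_congr rfl fun i _ => by simp [mul_assoc]

lemma pairing_smul_left (c : ℝ) (u v : Fin n → ℝ) :
    pairing (c • u) v = c * pairing u v := (pairL v).map_smul c u

lemma pairing_add_left (u u' v : Fin n → ℝ) :
    pairing (u + u') v = pairing u v + pairing u' v := (pairL v).map_add u u'

lemma pairing_sub_left (u u' v : Fin n → ℝ) :
    pairing (u - u') v = pairing u v - pairing u' v := (pairL v).map_sub u u'

lemma continuous_pairing (v : Fin n → ℝ) : Continuous fun u => pairing u v :=
  continuous_finset_sum _ fun i _ => (continuous_apply i).mul continuous_const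

lemma abs_pairing_le (u v : Fin n → ℝ) : |pairing u v| ≤ ‖u‖ * ∑ i, |v i| := by
  calc |pairing u v| ≤ ∑ i, |u i * v i| := Finset.abs_sum_le_sum_abs _ _
    _ ≤ ∑ i, ‖u‖ * |v i| := by
        refine Finset.sum_le_sum fun i _ => ?_
        rw [abs_mul]
        have : |u i| ≤ ‖u‖ := by
          simpa [Real.norm_eq_abs] using norm_le_pi_norm u i
        exact mul_le_mul_of_nonneg_right this (abs_nonneg _)
    _ = ‖u‖ * ∑ i, |v i| := (Finset.mul_sum _ _ _).symm

lemma mem_dualCone_iff {σ : Set (Fin n → ℝ)} {s : Finset (Fin n → ℤ)}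
    (hσ : σ = {x | ∃ c : (Fin n → ℤ) → ℝ, (∀ g ∈ s, 0 ≤ c g) ∧
        x = ∑ g ∈ s, c g • (fun i => (g i : ℝ))}) (u : Fin n → ℝ) :
    u ∈ dualCone σ ↔ ∀ g ∈ s, 0 ≤ pairing u (fun i => (g i : ℝ)) := by
  classical
  constructor
  · intro hu g hg
    refine hu _ ?_
    rw [hσ]
    refine ⟨fun h => if h = g then 1 else 0, fun h _ => by positivity, ?_⟩
    have h1 : ∀ h ∈ s, (if h = g then (1:ℝ) else 0) • (fun i => ((h i : ℝ)))
        = (if h = g then (fun i => ((h i : ℝ))) else 0) := by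
      intro h _
      split <;> simp
    rw [Finset.sum_congr rfl h1]
    have h2 : ∀ h ∈ s, (if h = g then (fun i => ((h i : ℝ))) else 0)
        = (if h = g then (fun i => ((g i : ℝ))) else 0) := by
      intro h _
      split
      · next heq => rw [heq]
      · rfl
    rw [Finset.sum_congr rfl h2, Finset.sum_ite_eq' s g]
    simp [hg]
  · intro hu v hv
    rw [hσ] at hv
    obtain ⟨c, hc, rfl⟩ := hv
    rw [pairing_comm]
    show 0 ≤ pairL u (∑ g ∈ s, c g • (fun i => ((g i : ℝ))))
    rw [map_sum]
    refine Finset.sum_nonneg fun g hg => ?_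
    rw [LinearMap.map_smul, smul_eq_mul]
    refine mul_nonneg (hc g hg) ?_
    show (0:ℝ) ≤ pairing _ u
    rw [pairing_comm]
    exact hu g hg

lemma rat_dense (s : Finset (Fin n → ℤ)) (x : Fin n → ℝ)
    (hx : ∀ g ∈ s, 0 ≤ pairing x (fun i => (g i : ℝ)))
    {ε : ℝ} (hε : 0 < ε) :
    ∃ w : Fin n → ℚ,
      (∀ g ∈ s, 0 ≤ pairing (fun i => ((w i : ℝ))) (fun i => (g i : ℝ))) ∧
      dist (fun i => ((w i : ℝ))) x < ε := by
  classical
  set I : Finset (Fin n → ℤ) :=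
    s.filter (fun g => pairing x (fun i => (g i : ℝ)) = 0) with hI
  set sQ : Set (Fin n → ℚ) :=
    (fun g : Fin n → ℤ => fun i => ((g i : ℚ))) '' (I : Set (Fin n → ℤ)) with hsQ
  obtain ⟨b, hbsub, hbspan, hbind⟩ := exists_linearIndependent ℚ sQ
  have hbfin : b.Finite := (I.finite_toSet.image _).subset hbsub
  haveI : Fintype b := hbfin.fintype
  set A : Matrix b (Fin n) ℚ := Matrix.of (fun (i : b) j => (i : Fin n → ℚ) j) with hA
  set G : Matrix b b ℚ := A * Aᵀ with hG
  -- Gram matrix invertible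
  have hGdet : IsUnit G.det := by
    rw [isUnit_iff_ne_zero]
    intro hdet
    obtain ⟨c, hc0, hcv⟩ := Matrix.exists_mulVec_eq_zero_iff.mpr hdet
    have hAty : A.mulVec (Aᵀ.mulVec c) = 0 := by
      rw [Matrix.mulVec_mulVec, ← hG, hcv]
    have hyy : dotProduct (Aᵀ.mulVec c) (Aᵀ.mulVec c) = 0 := by
      rw [Matrix.dotProduct_mulVec, Matrix.vecMul_transpose, hAty]
      simp [dotProduct]
    have hy0 : Aᵀ.mulVec c = 0 := by
      funext j
      have h1 : ∀ j ∈ Finset.univ (α := Fin n),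
          0 ≤ (Aᵀ.mulVec c) j * (Aᵀ.mulVec c) j := fun j _ => mul_self_nonneg _
      have := (Finset.sum_eq_zero_iff_of_nonneg h1).mp hyy j (Finset.mem_univ j)
      exact mul_self_eq_zero.mp this
    have := (Fintype.linearIndependent_iff.mp hbind) c ?_
    · exact hc0 (funext fun i => this i)
    · funext j
      have := congrFun hy0 j
      simpa [Matrix.mulVec, dotProduct, Matrix.transpose_apply, hA,
        mul_comm] using this
  set P : Matrix (Fin n) (Fin n) ℚ := Aᵀ * G⁻¹ * A with hP
  have hAP : A * P = A := by
    rw [hP, ← Matrix.mul_assoc, ← Matrix.mul_assoc, ← hG,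
      Matrix.mul_nonsing_inv _ hGdet, Matrix.one_mul]
  set cR : ℚ →+* ℝ := Rat.castHom ℝ with hcR
  set PR : Matrix (Fin n) (Fin n) ℝ := P.map cR with hPR
  set T : (Fin n → ℝ) → (Fin n → ℝ) := fun v => v - PR.mulVec v with hT
  have hTcont : Continuous T := by
    refine continuous_id.sub ?_
    refine continuous_pi fun i => ?_
    simp only [Matrix.mulVec, dotProduct]
    exact continuous_finset_sum _ fun j _ => continuous_const.mul (continuous_apply j)
  have hARx : (A.map cR).mulVec x = 0 := by
    funext i
    obtain ⟨g, hgI, hgi⟩ := hbsub i.2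
    have hg0 : pairing x (fun k => (g k : ℝ)) = 0 := (Finset.mem_filter.mp hgI).2
    have : ∀ j, (A.map cR) i j = ((g j : ℝ)) := by
      intro j
      have : (i : Fin n → ℚ) j = ((g j : ℚ)) := by rw [← hgi]
      simp [Matrix.map_apply, hA, this, hcR]
    simp only [Matrix.mulVec, dotProduct, this, Pi.zero_apply]
    rw [← hg0]
    simp [pairing, mul_comm]
  have hPRx : PR.mulVec x = 0 := by
    have hmap : PR = (Aᵀ.map cR) * ((G⁻¹).map cR) * (A.map cR) := by
      rw [hPR, hP, Matrix.map_mul (f := cR), Matrix.map_mul (f := cR)]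
    rw [hmap, ← Matrix.mulVec_mulVec, ← Matrix.mulVec_mulVec, hARx,
      Matrix.mulVec_zero, Matrix.mulVec_zero]
  have hTx : T x = x := by rw [hT]; simp [hPRx]
  -- the open neighbourhood
  set W : Set (Fin n → ℝ) := Metric.ball x ε ∩
      ⋂ g ∈ s \ I, {v | 0 < pairing v (fun i => (g i : ℝ))} with hW
  have hWopen : IsOpen W := by
    refine Metric.isOpen_ball.inter (isOpen_biInter_finset fun g _ => ?_)
    exact isOpen_lt continuous_const (continuous_pairing _)
  have hxW : x ∈ W := by
    refine ⟨Metric.mem_ball_self hε, ?_⟩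
    refine Set.mem_iInter₂.mpr fun g hg => ?_
    rw [Finset.mem_sdiff, hI, Finset.mem_filter] at hg
    have hgs : g ∈ s := hg.1
    have : pairing x (fun i => (g i : ℝ)) ≠ 0 := fun h => hg.2 ⟨hgs, h⟩
    exact lt_of_le_of_ne (hx g hgs) (Ne.symm this)
  obtain ⟨δ, hδ, hball⟩ := Metric.mem_nhds_iff.mp
    ((hWopen.preimage hTcont).mem_nhds
      (show T x ∈ W by rw [hTx]; exact hxW))
  -- pick a rational point near x
  have hq : ∀ i, ∃ q : ℚ, |x i - (q : ℝ)| < δ := fun i => exists_rat_near (x i) hδ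
  choose q hq using hq
  have hqx : dist (fun i => ((q i : ℝ))) x < δ := by
    rw [dist_pi_lt_iff hδ]
    intro i
    rw [Real.dist_eq, abs_sub_comm]
    exact hq i
  have hqW : T (fun i => ((q i : ℝ))) ∈ W := hball hqx
  set wQ : Fin n → ℚ := (fun i => q i) - P.mulVec (fun i => q i) with hwQ
  have hcast : (fun i => ((wQ i : ℝ))) = T (fun i => ((q i : ℝ))) := by
    funext i
    rw [hwQ, hT]
    simp only [Pi.sub_apply, Matrix.mulVec, dotProduct, Matrix.map_apply]
    push_cast
    ring_nf
    rfl
  refine ⟨wQ, ?_, ?_⟩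
  · intro g hgs
    by_cases hgI : g ∈ I
    · -- tight constraint: exactly zero
      have hgQ : (fun i => ((g i : ℚ))) ∈ sQ := ⟨g, hgI, rfl⟩
      set φ : (Fin n → ℚ) →ₗ[ℚ] ℚ :=
        { toFun := fun v => dotProduct wQ v
          map_add' := fun v w => dotProduct_add wQ v w
          map_smul' := fun c v => by
            simpa using dotProduct_smul c wQ v } with hφ
      have hAw : A.mulVec wQ = 0 := by
        rw [hwQ, Matrix.mulVec_sub, Matrix.mulVec_mulVec, hAP, sub_self]
      have hbker : b ⊆ (LinearMap.ker φ : Set (Fin n → ℚ)) := by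
        intro v hv
        have := congrFun hAw ⟨v, hv⟩
        simp only [Matrix.mulVec, dotProduct, hA, Matrix.of_apply,
          Pi.zero_apply] at this
        simp only [SetLike.mem_coe, LinearMap.mem_ker, hφ, LinearMap.coe_mk,
          AddHom.coe_mk, dotProduct]
        rw [← this]
        exact Finset.sum_congr rfl fun j _ => mul_comm _ _
      have hspanker : Submodule.span ℚ sQ ≤ LinearMap.ker φ := by
        rw [← hbspan]
        exact Submodule.span_le.mpr hbker
      have hφg : φ (fun i => ((g i : ℚ))) = 0 :=
        hspanker (Submodule.subset_span hgQ)
      have : dotProduct wQ (fun i => ((g i : ℚ))) = 0 := hφg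
      have hcast2 : pairing (fun i => ((wQ i : ℝ))) (fun i => (g i : ℝ))
          = ((dotProduct wQ (fun i => ((g i : ℚ))) : ℚ) : ℝ) := by
        rw [pairing, dotProduct]
        push_cast
        rfl
      rw [hcast2, this]
      norm_num
    · -- slack constraint: positive by openness
      have hgW := Set.mem_iInter₂.mp hqW.2 g (Finset.mem_sdiff.mpr ⟨hgs, hgI⟩)
      rw [← hcast] at hgW
      exact le_of_lt hgW
  · rw [hcast]
    exact hqW.1


lemma isClosed_dualCone (σ : Set (Fin n → ℝ)) : IsClosed (dualCone σ) := by
  have : dualCone σ = ⋂ v ∈ σ, {u | 0 ≤ pairing u v} := by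
    ext u; simp [dualCone, Set.mem_iInter]
  rw [this]
  exact isClosed_biInter fun v _ => isClosed_le continuous_const (continuous_pairing v)

lemma norm_sq_le_pairing_self (hn : 1 ≤ n) (u : Fin n → ℝ) :
    ‖u‖ * ‖u‖ ≤ pairing u u := by
  haveI : Nonempty (Fin n) := ⟨⟨0, hn⟩⟩
  obtain ⟨i, -, hi⟩ := Finset.exists_mem_eq_sup (Finset.univ : Finset (Fin n))
    Finset.univ_nonempty (fun i => ‖u i‖₊)
  have hnorm : ‖u‖ = |u i| := by
    rw [Pi.norm_def, hi]
    simp [Real.norm_eq_abs]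
  rw [hnorm, abs_mul_abs_self]
  exact Finset.single_le_sum (f := fun j => u j * u j)
    (fun j _ => mul_self_nonneg _) (Finset.mem_univ i)

lemma Q_isCompact (hn : 1 ≤ n) {σ : Set (Fin n → ℝ)} {ξ : Fin n → ℝ}
    (hξ : ξ ∈ interior σ) :
    IsCompact {u : Fin n → ℝ | u ∈ dualCone σ ∧ pairing u ξ ≤ 1} := by
  obtain ⟨ε, hε, hball⟩ := Metric.isOpen_iff.mp isOpen_interior ξ hξ
  have hclosed : IsClosed {u : Fin n → ℝ | u ∈ dualCone σ ∧ pairing u ξ ≤ 1} := by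
    have : {u : Fin n → ℝ | u ∈ dualCone σ ∧ pairing u ξ ≤ 1}
        = dualCone σ ∩ {u | pairing u ξ ≤ 1} := rfl
    rw [this]
    exact (isClosed_dualCone σ).inter (isClosed_le (continuous_pairing ξ) continuous_const)
  refine IsCompact.of_isClosed_subset (isCompact_closedBall 0 (2/ε)) hclosed ?_
  rintro u ⟨hud, huξ⟩
  rw [mem_closedBall_zero_iff]
  rcases eq_or_ne u 0 with rfl | hu0
  · simp; positivity
  · set r : ℝ := ‖u‖ with hr
    have hrpos : 0 < r := norm_pos_iff.mpr hu0
    set c : ℝ := ε / (2 * r) with hc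
    have hcpos : 0 < c := by positivity
    set v : Fin n → ℝ := ξ - c • u with hv
    have hvσ : v ∈ σ := by
      refine interior_subset (hball ?_)
      rw [Metric.mem_ball, dist_eq_norm]
      have : v - ξ = -(c • u) := by rw [hv]; abel
      rw [this, norm_neg, norm_smul, Real.norm_eq_abs, abs_of_pos hcpos, ← hr]
      rw [hc]
      rw [div_mul_eq_mul_div, mul_comm]
      have h1 : r * ε / (2 * r) = ε / 2 := by
        field_simp
      rw [h1]
      linarith
    have h0 : 0 ≤ pairing u v := hud v hvσ
    have hexp : pairing u v = pairing u ξ - c * pairing u u := by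
      rw [pairing_comm, hv, pairing_sub_left, pairing_smul_left, pairing_comm u ξ,
        pairing_comm u u]
    have hsq : r * r ≤ pairing u u := norm_sq_le_pairing_self hn u
    have : c * (r * r) ≤ 1 := by
      calc c * (r * r) ≤ c * pairing u u := by
            exact mul_le_mul_of_nonneg_left hsq hcpos.le
        _ ≤ pairing u ξ := by linarith [hexp ▸ h0]
        _ ≤ 1 := huξ
    rw [hc] at this
    rw [div_mul_eq_mul_div] at this
    have h2r : 0 < 2 * r := by positivity
    have := (div_le_one h2r).mp this
    -- ε * (r * r) ≤ 2 * r  ⇒  r ≤ 2 / ε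
    rw [le_div_iff₀ hε]
    nlinarith

end OkHelper

/-- For an affine toric variety with Reeb vector `ξ ∈ int σ`, the
Okounkov body `Δ = closure ⋃_m (1/m)·Conv(ι(m Q_ξ ∩ M))` with respect to the flag
valuation determined by a basis `e_1,…,e_n ∈ σ` of determinant one equals `ι(Q_ξ)`,
where `Q_ξ = {u ∈ σ^∨ : ⟨u,ξ⟩ ≤ 1}` and `ι u = (⟨u,e_1⟩,…,⟨u,e_n⟩)`. -/
theorem toric_okounkov_body_eq {n : ℕ} (hn : 1 ≤ n)
    (σ : Set (Fin n → ℝ))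
    (hσpoly : ∃ s : Finset (Fin n → ℤ),
      σ = {x | ∃ c : (Fin n → ℤ) → ℝ, (∀ g ∈ s, 0 ≤ c g) ∧
        x = ∑ g ∈ s, c g • (fun i => (g i : ℝ))})
    (ξ : Fin n → ℝ) (hξ : ξ ∈ interior σ)
    (e : Fin n → (Fin n → ℝ)) (he : ∀ i, e i ∈ σ)
    (hdet : Matrix.det (Matrix.of fun i j => e i j) = 1) :
    closure (⋃ m : ℕ,
        (1 / ((m : ℝ) + 1)) • convexHull ℝ
          ((fun u => fun i => pairing u (e i)) ''
            {u | isLatticePoint u ∧ u ∈ dualCone σ ∧ pairing u ξ ≤ (m : ℝ) + 1}))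
      = (fun u => fun i => pairing u (e i)) ''
          {u | u ∈ dualCone σ ∧ pairing u ξ ≤ 1} := by
  classical
  obtain ⟨s, hσs⟩ := hσpoly
  set ι : (Fin n → ℝ) →ₗ[ℝ] (Fin n → ℝ) :=
    { toFun := fun u => fun i => pairing u (e i)
      map_add' := fun u v => funext fun i => (OkHelper.pairL (e i)).map_add u v
      map_smul' := fun c u => funext fun i => (OkHelper.pairL (e i)).map_smul c u } with hι
  have hιdef : (fun u => fun i => pairing u (e i)) = ⇑ι := rfl
  rw [hιdef]
  set Q : Set (Fin n → ℝ) := {u | u ∈ dualCone σ ∧ pairing u ξ ≤ 1} with hQ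
  have hιcont : Continuous ⇑ι :=
    continuous_pi fun i => OkHelper.continuous_pairing (e i)
  have hQcomp : IsCompact Q := OkHelper.Q_isCompact hn hξ
  have hQconv : Convex ℝ Q := by
    rintro u ⟨hud, huξ⟩ v ⟨hvd, hvξ⟩ a b ha hb hab
    constructor
    · intro z hz
      rw [OkHelper.pairing_add_left, OkHelper.pairing_smul_left,
        OkHelper.pairing_smul_left]
      have := hud z hz
      have := hvd z hz
      positivity
    · rw [OkHelper.pairing_add_left, OkHelper.pairing_smul_left,
        OkHelper.pairing_smul_left]
      nlinarith
  have himg_comp : IsCompact (⇑ι '' Q) := hQcomp.image hιcont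
  have hclosed : IsClosed (⇑ι '' Q) := himg_comp.isClosed
  have hconv : Convex ℝ (⇑ι '' Q) := hQconv.linear_image ι
  apply le_antisymm
  · -- closure U ⊆ ι '' Q
    refine closure_minimal (Set.iUnion_subset fun m => ?_) hclosed
    set c : ℝ := (m : ℝ) + 1 with hc
    have hcpos : (0 : ℝ) < c := by positivity
    have claim1 : ⇑ι '' {u | isLatticePoint u ∧ u ∈ dualCone σ ∧ pairing u ξ ≤ c}
        ⊆ c • (⇑ι '' Q) := by
      rintro _ ⟨u, ⟨-, hud, huξ⟩, rfl⟩
      have h1 : (1/c) • u ∈ Q := by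
        constructor
        · intro v hv
          rw [OkHelper.pairing_smul_left]
          exact mul_nonneg (by positivity) (hud v hv)
        · rw [OkHelper.pairing_smul_left]
          rw [div_mul_eq_mul_div, one_mul, div_le_one hcpos]
          exact huξ
      have h2 : ι u = c • ι ((1/c) • u) := by
        rw [map_smul, smul_smul, mul_one_div_cancel hcpos.ne', one_smul]
      rw [h2]
      exact Set.smul_mem_smul_set (Set.mem_image_of_mem _ h1)
    have claim2 : convexHull ℝ
        (⇑ι '' {u | isLatticePoint u ∧ u ∈ dualCone σ ∧ pairing u ξ ≤ c})
        ⊆ c • (⇑ι '' Q) := convexHull_min claim1 (hconv.smul c)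
    have := Set.smul_set_mono (a := 1/c) claim2
    rw [smul_smul, one_div_mul_cancel hcpos.ne', one_smul] at this
    exact this
  · -- ι '' Q ⊆ closure U
    rintro _ ⟨x, ⟨hxd, hxξ⟩, rfl⟩
    rw [Metric.mem_closure_iff]
    intro ε' hε'
    obtain ⟨δ, hδ, hcont⟩ := Metric.continuousAt_iff.mp hιcont.continuousAt ε' hε'
    set η : ℝ := min (1/2) (δ / (2 * (‖x‖ + 1))) with hη
    have hηpos : 0 < η := by
      have : (0:ℝ) < δ / (2 * (‖x‖ + 1)) := by positivity
      simp [hη, this]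
    have hηle : η ≤ 1/2 := min_le_left _ _
    set y : Fin n → ℝ := (1 - η) • x with hy
    have hyd : y ∈ dualCone σ := by
      intro v hv
      rw [hy, OkHelper.pairing_smul_left]
      exact mul_nonneg (by linarith) (hxd v hv)
    have hyξ : pairing y ξ ≤ 1 - η := by
      rw [hy, OkHelper.pairing_smul_left]
      rcases le_or_gt (pairing x ξ) 0 with h | h
      · nlinarith
      · nlinarith
    set Cξ : ℝ := ∑ i, |ξ i| with hCξ
    have hCξ0 : 0 ≤ Cξ := Finset.sum_nonneg fun i _ => abs_nonneg _
    set ε2 : ℝ := min (δ/2) (η / (Cξ + 1)) with hε2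
    have hε2pos : 0 < ε2 := by
      have h1 : (0:ℝ) < δ/2 := by positivity
      have h2 : (0:ℝ) < η / (Cξ + 1) := by positivity
      simp [hε2, h1, h2]
    have hys : ∀ g ∈ s, 0 ≤ pairing y (fun i => (g i : ℝ)) :=
      fun g hg => (OkHelper.mem_dualCone_iff hσs y).mp hyd g hg
    obtain ⟨w, hws, hwdist⟩ := OkHelper.rat_dense s y hys hε2pos
    set w' : Fin n → ℝ := fun i => ((w i : ℝ)) with hw'
    have hw'd : w' ∈ dualCone σ := (OkHelper.mem_dualCone_iff hσs w').mpr hws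
    -- pairing w' ξ ≤ 1
    have hw'ξ : pairing w' ξ ≤ 1 := by
      have hdiff : |pairing (w' - y) ξ| ≤ ‖w' - y‖ * Cξ := OkHelper.abs_pairing_le _ _
      have hnd : ‖w' - y‖ < η / (Cξ + 1) := by
        have := lt_of_lt_of_le hwdist (min_le_right _ _)
        rwa [dist_eq_norm] at this
      have h3 : ‖w' - y‖ * Cξ < η := by
        have h4 : ‖w' - y‖ * (Cξ + 1) < η := by
          rw [← lt_div_iff₀ (by positivity)]
          exact hnd
        nlinarith [norm_nonneg (w' - y)]
      have h5 : pairing w' ξ = pairing y ξ + pairing (w' - y) ξ := by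
        rw [OkHelper.pairing_sub_left]; ring
      have := abs_le.mp hdiff
      linarith
    -- distance from x
    have hw'x : dist w' x < δ := by
      have h1 : dist w' y < δ/2 := lt_of_lt_of_le hwdist (min_le_left _ _)
      have h2 : dist y x ≤ δ/2 := by
        rw [hy, dist_eq_norm]
        have : (1 - η) • x - x = (-η) • x := by
          rw [sub_smul, one_smul, neg_smul]; abel
        rw [this, norm_smul, Real.norm_eq_abs, abs_neg, abs_of_pos hηpos]
        have hηle2 : η ≤ δ / (2 * (‖x‖ + 1)) := min_le_right _ _
        have hx0 : 0 ≤ ‖x‖ := norm_nonneg x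
        have : η * ‖x‖ ≤ (δ / (2 * (‖x‖ + 1))) * ‖x‖ :=
          mul_le_mul_of_nonneg_right hηle2 hx0
        have h6 : (δ / (2 * (‖x‖ + 1))) * ‖x‖ ≤ δ/2 := by
          rw [div_mul_eq_mul_div, div_le_div_iff₀ (by positivity) (by positivity)]
          nlinarith
        linarith
      calc dist w' x ≤ dist w' y + dist y x := dist_triangle _ _ _
        _ < δ/2 + δ/2 := by linarith
        _ = δ := by ring
    -- common denominator
    set d : ℕ := ∏ i, (w i).den with hd
    have hdpos : 0 < d := Finset.prod_pos fun i _ => (w i).pos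
    have hzint : ∀ i, ∃ z : ℤ, (w i) * (d : ℚ) = (z : ℚ) := by
      intro i
      obtain ⟨k, hk⟩ := Finset.dvd_prod_of_mem (fun i => (w i).den) (Finset.mem_univ i)
      refine ⟨(w i).num * (k : ℤ), ?_⟩
      rw [← hd] at hk
      rw [hk]
      push_cast
      rw [← mul_assoc, Rat.mul_den_eq_num]
    choose z hz using hzint
    set u' : Fin n → ℝ := (d : ℝ) • w' with hu'
    have hu'lat : isLatticePoint u' := by
      refine ⟨z, funext fun i => ?_⟩
      have := congrArg (fun q : ℚ => (q : ℝ)) (hz i)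
      push_cast at this
      simpa [hu', hw', mul_comm] using this
    have hu'd : u' ∈ dualCone σ := by
      intro v hv
      rw [hu', OkHelper.pairing_smul_left]
      exact mul_nonneg (by positivity) (hw'd v hv)
    have hu'ξ : pairing u' ξ ≤ ((d - 1 : ℕ) : ℝ) + 1 := by
      have hcast : ((d - 1 : ℕ) : ℝ) + 1 = (d : ℝ) := by
        rw [Nat.cast_sub hdpos, Nat.cast_one]; ring
      rw [hcast, hu', OkHelper.pairing_smul_left]
      calc (d : ℝ) * pairing w' ξ ≤ (d : ℝ) * 1 :=
            mul_le_mul_of_nonneg_left hw'ξ (by positivity)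
        _ = (d : ℝ) := mul_one _
    -- ι w' belongs to the m = d-1 term of the union
    have hmem : ι w' ∈ ⋃ m : ℕ,
        (1 / ((m : ℝ) + 1)) • convexHull ℝ
          (⇑ι '' {u | isLatticePoint u ∧ u ∈ dualCone σ ∧ pairing u ξ ≤ (m : ℝ) + 1}) := by
      refine Set.mem_iUnion.mpr ⟨d - 1, ?_⟩
      have hcast : ((d - 1 : ℕ) : ℝ) + 1 = (d : ℝ) := by
        rw [Nat.cast_sub hdpos, Nat.cast_one]; ring
      have hu'mem : u' ∈ {u | isLatticePoint u ∧ u ∈ dualCone σ ∧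
          pairing u ξ ≤ ((d - 1 : ℕ) : ℝ) + 1} := ⟨hu'lat, hu'd, hu'ξ⟩
      have h7 : ι u' ∈ convexHull ℝ
          (⇑ι '' {u | isLatticePoint u ∧ u ∈ dualCone σ ∧
            pairing u ξ ≤ ((d - 1 : ℕ) : ℝ) + 1}) :=
        subset_convexHull ℝ _ (Set.mem_image_of_mem _ hu'mem)
      have h8 : ι w' = (1 / (((d - 1 : ℕ) : ℝ) + 1)) • ι u' := by
        rw [hcast, hu', map_smul, smul_smul]
        have : (d : ℝ) ≠ 0 := by positivity
        rw [one_div_mul_cancel this, one_smul]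
      rw [h8]
      exact Set.smul_mem_smul_set h7
    exact ⟨ι w', hmem, by rw [dist_comm]; exact hcont hw'x⟩


end
end

section
/- Let f ∈ K[[z_1,...,z_n]] with expansion f = Σ_β a_β z^β, and let β₀ ∈ N^n be the minimum of {β : a_β ≠ 0} in lexicographic order (in the precise sense of the flag valuation v, so v(f) = β₀). Define C_f = {t ∈ R^n_{≥0} : t_i ≥ Σ_{j>i} β_{0j} t_j for 1 ≤ i ≤ n−1}. Then for every t ∈ C_f we have w_t(f) = β₀ · t, where w_t(f) = min{β·t : a_β ≠ 0} is the monomial valuation with weights t. -/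
private lemma key_ineq {n : ℕ} (β₀ β : Fin n →₀ ℕ) (t : Fin n → ℝ)
    (ht0 : ∀ i, 0 ≤ t i)
    (htC : ∀ i : Fin n,
      (∑ j ∈ Finset.univ.filter (fun j => i < j), (β₀ j : ℝ) * t j) ≤ t i)
    (h : toLex β₀ ≤ toLex β) :
    (∑ i, (β₀ i : ℝ) * t i) ≤ ∑ i, (β i : ℝ) * t i := by
  rcases (le_iff_eq_or_lt.mp h).imp id (fun hlt => (Finsupp.lex_def.mp hlt : ∃ i, (∀ j, j < i → ofLex (toLex β₀) j = ofLex (toLex β) j) ∧ ofLex (toLex β₀) i < ofLex (toLex β) i)) with heq | ⟨i, hj, hi⟩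
  · have : β₀ = β := congrArg ofLex heq
    subst this; exact le_refl _
  · have hsplit : ∀ g : Fin n → ℝ,
        (∑ j, g j) = (∑ j ∈ Finset.univ.filter (fun j => j < i), g j)
          + g i + (∑ j ∈ Finset.univ.filter (fun j => i < j), g j) := by
      intro g
      rw [← Finset.sum_filter_add_sum_filter_not Finset.univ (fun j => j < i) g]
      have hset : Finset.univ.filter (fun j : Fin n => ¬ j < i)
          = insert i (Finset.univ.filter (fun j => i < j)) := by
        ext j
        simp only [Finset.mem_filter, Finset.mem_univ, true_and, Finset.mem_insert,
          not_lt]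
        constructor
        · intro hji
          rcases eq_or_lt_of_le hji with h' | h'
          · exact Or.inl h'.symm
          · exact Or.inr h'
        · rintro (rfl | h')
          · exact le_refl _
          · exact le_of_lt h'
      rw [hset, Finset.sum_insert (by simp)]
      ring
  -- the prefix sums agree
    have hpre : (∑ j ∈ Finset.univ.filter (fun j => j < i), ((β₀ j : ℝ) * t j))
        = ∑ j ∈ Finset.univ.filter (fun j => j < i), ((β j : ℝ) * t j) := by
      apply Finset.sum_congr rfl
      intro j hjmem
      rw [Finset.mem_filter] at hjmem
      have := hj j hjmem.2
      simp only [ofLex_toLex] at this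
      rw [this]
    rw [hsplit (fun j => (β₀ j : ℝ) * t j), hsplit (fun j => (β j : ℝ) * t j), hpre]
    have h1 : (∑ j ∈ Finset.univ.filter (fun j => i < j), (β₀ j : ℝ) * t j) ≤ t i :=
      htC i
    have h2 : (0:ℝ) ≤ ∑ j ∈ Finset.univ.filter (fun j => i < j), (β j : ℝ) * t j :=
      Finset.sum_nonneg fun j _ => mul_nonneg (Nat.cast_nonneg _) (ht0 j)
    have h3 : ((β₀ i : ℝ) + 1) * t i ≤ (β i : ℝ) * t i := by
      apply mul_le_mul_of_nonneg_right _ (ht0 i)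
      have h4 := hi
      simp only [ofLex_toLex] at h4
      have : (β₀ i : ℕ) + 1 ≤ β i := h4
      exact_mod_cast this
    nlinarith [ht0 i]

/-- Let `f ∈ K⟦z_1,…,z_n⟧` and let `β₀` be the lex-minimal exponent
of `f` (the value of the flag valuation). On the cone
`C_f = {t ≥ 0 : t_i ≥ Σ_{j>i} β₀_j t_j}` the monomial valuation with weights `t`
satisfies `w_t(f) = β₀ · t`. -/
theorem monomial_valuation_eq_on_cone {n : ℕ} {K : Type*} [Field K]
    (f : MvPowerSeries (Fin n) K)
    (β₀ : Fin n →₀ ℕ)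
    (hmem : MvPowerSeries.coeff β₀ f ≠ 0)
    (hlexmin : ∀ β : Fin n →₀ ℕ, MvPowerSeries.coeff β f ≠ 0 →
      toLex β₀ ≤ toLex β)
    (t : Fin n → ℝ) (ht0 : ∀ i, 0 ≤ t i)
    (htC : ∀ i : Fin n,
      (∑ j ∈ Finset.univ.filter (fun j => i < j), (β₀ j : ℝ) * t j) ≤ t i) :
    sInf {r : ℝ | ∃ β : Fin n →₀ ℕ, MvPowerSeries.coeff β f ≠ 0 ∧
        r = ∑ i, (β i : ℝ) * t i}
      = ∑ i, (β₀ i : ℝ) * t i := by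
  have hne : {r : ℝ | ∃ β : Fin n →₀ ℕ, MvPowerSeries.coeff β f ≠ 0 ∧
      r = ∑ i, (β i : ℝ) * t i}.Nonempty := ⟨_, β₀, hmem, rfl⟩
  have hlb : ∀ r ∈ {r : ℝ | ∃ β : Fin n →₀ ℕ, MvPowerSeries.coeff β f ≠ 0 ∧
      r = ∑ i, (β i : ℝ) * t i}, (∑ i, (β₀ i : ℝ) * t i) ≤ r := by
    rintro r ⟨β, hβ, rfl⟩
    exact key_ineq β₀ β t ht0 htC (hlexmin β hβ)
  apply le_antisymm
  · exact csInf_le ⟨_, hlb⟩ ⟨β₀, hmem, rfl⟩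
  · exact le_csInf hne hlb
end

section
/- Let S: C → R be a function on an open convex cone C ⊂ R^n that is nonincreasing with respect to the partial order induced by Λ ⊂ (R^n)^* (i.e., S(ξ') ≤ S(ξ) whenever ⟨α, ξ' − ξ⟩ > 0 for all α ∈ Λ) and homogeneous of degree −1 (S(tξ) = t^{-1}S(ξ) for t > 0). Then S is continuous on C. -/
/-- A function `S` on an open convex cone
`C = {ξ : ⟨α,ξ⟩ > 0 ∀ α ∈ Λ}` which is nonincreasing for the order induced by `Λ`
and homogeneous of degree `-1` is continuous on `C`. -/
theorem monotone_homogeneous_continuous {n : ℕ}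
    (Λ : Set ((Fin n → ℝ) →ₗ[ℝ] ℝ))
    (C : Set (Fin n → ℝ))
    (hC : C = {ξ | ∀ α ∈ Λ, 0 < α ξ})
    (hCopen : IsOpen C)
    (hCconv : Convex ℝ C)
    (hCne : C.Nonempty)
    (S : (Fin n → ℝ) → ℝ)
    (hmono : ∀ ξ ∈ C, ∀ ξ' ∈ C, (∀ α ∈ Λ, 0 < α (ξ' - ξ)) → S ξ' ≤ S ξ)
    (hhom : ∀ ξ ∈ C, ∀ t : ℝ, 0 < t → S (t • ξ) = t⁻¹ * S ξ) :
    ContinuousOn S C := by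
  intro ξ hξ
  rw [Metric.continuousWithinAt_iff]
  intro ε hε
  obtain ⟨r, hr, hball⟩ := Metric.isOpen_iff.mp hCopen ξ hξ
  have hSd : (0:ℝ) < |S ξ| + 1 := by positivity
  set d : ℝ := min (1/2) (ε / (2 * (|S ξ| + 1))) with hd
  have hd0 : 0 < d := lt_min (by norm_num) (by positivity)
  have hd2 : d ≤ 1/2 := min_le_left _ _
  have hdε : d ≤ ε / (2 * (|S ξ| + 1)) := min_le_right _ _
  have hdε' : 2 * d * (|S ξ| + 1) ≤ ε := by
    rw [le_div_iff₀ (by positivity)] at hdε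
    linarith
  refine ⟨r * d, by positivity, fun η hη hdist => ?_⟩
  have hξC : ∀ α ∈ Λ, 0 < α ξ := by rw [hC] at hξ; exact hξ
  have key : ∀ v : Fin n → ℝ, ‖v‖ < r * d → ∀ α ∈ Λ, 0 < α (d • ξ + v) := by
    intro v hv α hα
    have hmem : ξ + d⁻¹ • v ∈ C := by
      apply hball
      rw [Metric.mem_ball, dist_eq_norm]
      have h1 : ξ + d⁻¹ • v - ξ = d⁻¹ • v := by abel
      rw [h1, norm_smul, Real.norm_eq_abs, abs_of_pos (inv_pos.mpr hd0)]
      calc d⁻¹ * ‖v‖ < d⁻¹ * (r * d) := by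
            exact mul_lt_mul_of_pos_left hv (inv_pos.mpr hd0)
        _ = r := by field_simp
    rw [hC] at hmem
    have hpos := hmem α hα
    have heq : d • ξ + v = d • (ξ + d⁻¹ • v) := by
      rw [smul_add, smul_smul]
      field_simp
      rw [one_smul]
    rw [heq, map_smul, smul_eq_mul]
    exact mul_pos hd0 hpos
  have hscale : ∀ t : ℝ, 0 < t → t • ξ ∈ C := by
    intro t ht
    rw [hC]
    intro α hα
    rw [map_smul, smul_eq_mul]
    exact mul_pos ht (hξC α hα)
  have hηnorm : ‖η - ξ‖ < r * d := by rwa [← dist_eq_norm]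
  have hup : S ((1+d) • ξ) ≤ S η := by
    apply hmono η hη _ (hscale (1+d) (by linarith))
    intro α hα
    have h1 : (1+d) • ξ - η = d • ξ + (ξ - η) := by module
    rw [h1]
    exact key _ (by rwa [norm_sub_rev]) α hα
  have hlow : S η ≤ S ((1-d) • ξ) := by
    apply hmono _ (hscale (1-d) (by linarith)) η hη
    intro α hα
    have h1 : η - (1-d) • ξ = d • ξ + (η - ξ) := by module
    rw [h1]
    exact key _ hηnorm α hα
  rw [hhom ξ hξ _ (by linarith : (0:ℝ) < 1+d)] at hup
  rw [hhom ξ hξ _ (by linarith : (0:ℝ) < 1-d)] at hlow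
  have h1d : (0:ℝ) < 1 - d := by linarith
  have h1d' : (0:ℝ) < 1 + d := by linarith
  have ha1 : S ξ ≤ (1+d) * S η := by
    have := mul_le_mul_of_nonneg_left hup h1d'.le
    rwa [← mul_assoc, mul_inv_cancel₀ h1d'.ne', one_mul] at this
  have ha2 : (1-d) * S η ≤ S ξ := by
    have := mul_le_mul_of_nonneg_left hlow h1d.le
    rwa [← mul_assoc, mul_inv_cancel₀ h1d.ne', one_mul] at this
  have habs1 : S ξ ≤ |S ξ| := le_abs_self _
  have habs2 : -|S ξ| ≤ S ξ := neg_abs_le _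
  have habs0 : 0 ≤ |S ξ| := abs_nonneg _
  have hSη_le : S η ≤ 2 * |S ξ| := by nlinarith
  have hSη_ge : -(2 * |S ξ|) ≤ S η := by nlinarith
  rw [Real.dist_eq, abs_sub_lt_iff]
  constructor
  · nlinarith
  · nlinarith
end
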